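/- For every graph G on n vertices with at least one edge, the reduced homology of the noncover complex NC(G) vanishes in all dimensions j ≥ n − iγ(G) − 1. -/

import Mathlib

variable {V : Type*} [Fintype V] [LinearOrder V]

open Finset


/-- `W` dominates the set `A` in `G`: every vertex of `A` is in `W` or adjacent to a vertex of `W`. -/
def Dominates (G : SimpleGraph V) (W A : Finset V) : Prop :=
  ∀ a ∈ A, a ∈ W ∨ ∃ w ∈ W, G.Adj w a

/-- `I` is an independent set of `G`. -/
def IndepSet (G : SimpleGraph V) (I : Finset V) : Prop :=
  ∀ u ∈ I, ∀ v ∈ I, ¬ G.Adj u v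

instance (G : SimpleGraph V) [DecidableRel G.Adj] (I : Finset V) :
    Decidable (IndepSet G I) := by unfold IndepSet; infer_instance

/-- The domination number of `G`. -/
noncomputable def gamma (G : SimpleGraph V) : ℕ :=
  sInf {k | ∃ W : Finset V, W.card = k ∧ Dominates G W Finset.univ}

/-- The independence domination number of `G`. -/
noncomputable def igamma (G : SimpleGraph V) : ℕ :=
  sInf {k | ∀ I : Finset V, IndepSet G I → ∃ W : Finset V, W.card ≤ k ∧ Dominates G W I}

/-- The noncover complex of `G`: faces are the vertex sets whose complement is not independent. -/
def NC (G : SimpleGraph V) [DecidableRel G.Adj] : Finset (Finset V) :=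
  Finset.univ.filter fun W => ¬ IndepSet G Wᶜ

/-- The independence complex of `G`. -/
def IndComplex (G : SimpleGraph V) [DecidableRel G.Adj] : Finset (Finset V) :=
  Finset.univ.filter fun I => IndepSet G I

/-- The combinatorial Alexander dual of a complex on the full vertex set `V`. -/
def AlexDual (K : Finset (Finset V)) : Finset (Finset V) :=
  Finset.univ.filter fun s => sᶜ ∉ K

/-- `K` is a simplicial complex (downward closed family of finite sets). -/
def IsComplex (K : Finset (Finset V)) : Prop :=
  ∀ σ ∈ K, ∀ τ ⊆ σ, τ ∈ K

/-- `s` is a maximal face (facet) of `K`. -/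
def IsMaxFace (K : Finset (Finset V)) (s : Finset V) : Prop :=
  s ∈ K ∧ ∀ t ∈ K, s ⊆ t → t = s

/-- `σ` is a free face of `K`: a face contained in a unique maximal face. -/
def IsFreeFace (K : Finset (Finset V)) (σ : Finset V) : Prop :=
  σ ∈ K ∧ ∃ τ ∈ K, σ ⊆ τ ∧ ∀ ρ ∈ K, σ ⊆ ρ → ρ ⊆ τ

/-- `K'` is obtained from `K` by an elementary `d`-collapse. -/
def ElemCollapse (d : ℕ) (K K' : Finset (Finset V)) : Prop :=
  ∃ σ : Finset V, IsFreeFace K σ ∧ σ.card ≤ d ∧ K' = K.filter fun ρ => ¬ σ ⊆ ρ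

/-- `K` is `d`-collapsible. -/
def Collapsible (d : ℕ) (K : Finset (Finset V)) : Prop :=
  Relation.ReflTransGen (ElemCollapse d) K ∅

/-- chordality -/
def IsChordal (G : SimpleGraph V) : Prop :=
  ∀ (u : V) (c : G.Walk u u), c.IsCycle → 4 ≤ c.length →
    ∃ x ∈ c.support, ∃ y ∈ c.support, G.Adj x y ∧ s(x, y) ∉ c.edges

/-- simplicial vertex -/
def IsSimplicialVtx (G : SimpleGraph V) (v : V) : Prop :=
  ∀ x y : V, G.Adj v x → G.Adj v y → x ≠ y → G.Adj x y


/-- The group of simplicial `ℤ`-chains of `K` supported on faces of cardinality `k`. -/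
abbrev chainC (K : Finset (Finset V)) (k : ℕ) : Type _ :=
  {s : Finset V // s ∈ K ∧ s.card = k} → ℤ

/-- The simplicial boundary map from chains on faces of cardinality `k+1`
to chains on faces of cardinality `k` (for `k = 0` this is the augmentation map,
so the associated homology is reduced homology). -/
noncomputable def bdry (K : Finset (Finset V)) (k : ℕ) :
    chainC K (k + 1) →ₗ[ℤ] chainC K k where
  toFun c t :=
    ∑ s : {s : Finset V // s ∈ K ∧ s.card = k + 1},
      if t.1 ⊆ s.1 then
        (∑ v ∈ s.1 \ t.1, (-1 : ℤ) ^ (t.1.filter (· < v)).card) * c s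
      else 0
  map_add' c c' := by
    funext t
    simp only [Pi.add_apply]
    rw [← Finset.sum_add_distrib]
    exact Finset.sum_congr rfl fun s _ => by split <;> ring
  map_smul' r c := by
    funext t
    simp only [Pi.smul_apply, smul_eq_mul, RingHom.id_apply]
    rw [Finset.mul_sum]
    exact Finset.sum_congr rfl fun s _ => by split <;> ring

/-- The reduced simplicial homology of `K` (with `ℤ` coefficients) in dimension `j ≥ 0`:
cycles of dimension `j` (faces of cardinality `j+1`) modulo boundaries. -/
noncomputable abbrev rHomology (K : Finset (Finset V)) (j : ℕ) :=
  LinearMap.ker (bdry K j) ⧸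
    (LinearMap.range (bdry K (j + 1))).comap (LinearMap.ker (bdry K j)).subtype

/-- Vanishing of the reduced simplicial homology `H̃_j(K)` with `ℤ` coefficients,
for an arbitrary integer dimension `j` (trivial for `j ≤ -2`). -/
def RHomVanishes (K : Finset (Finset V)) (j : ℤ) : Prop :=
  if j ≤ -2 then True
  else if j = -1 then ∀ c : chainC K 0, ∃ b : chainC K 1, bdry K 0 b = c
  else ∀ c : chainC K (j.toNat + 1), bdry K j.toNat c = 0 →
    ∃ b : chainC K (j.toNat + 2), bdry K (j.toNat + 1) b = c


namespace NCAux

/-- sign of vertex `v` relative to face `t` -/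
def sgn (v : V) (t : Finset V) : ℤ := (-1) ^ (t.filter (· < v)).card

/-- total simplicial boundary on coefficient functions -/
def Dd (x : Finset V → ℤ) (t : Finset V) : ℤ :=
  ∑ v ∈ tᶜ, sgn v t * x (insert v t)

lemma sgn_mul_self (v : V) (t : Finset V) : sgn v t * sgn v t = 1 := by
  unfold sgn; rw [← pow_add]; exact Even.neg_one_pow ⟨_, rfl⟩

lemma sgn_insert {v w : V} (t : Finset V) (hv : v ∉ t) (hw : w ≠ v) :
    sgn w (insert v t) = (if v < w then -1 else 1) * sgn w t := by
  unfold sgn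
  rw [Finset.filter_insert]
  split_ifs with h
  · rw [Finset.card_insert_of_notMem (fun hc => hv (Finset.mem_of_mem_filter _ hc)), pow_succ]
    ring
  · ring

lemma sgn_swap {v u : V} (t : Finset V) (hv : v ∉ t) (hu : u ∉ t) (hne : u ≠ v) :
    sgn v t * sgn u (insert v t) = -(sgn u t * sgn v (insert u t)) := by
  rw [sgn_insert t hv hne, sgn_insert t hu (Ne.symm hne)]
  rcases lt_or_gt_of_ne hne with h | h
  · rw [if_neg (asymm h), if_pos h]; ring
  · rw [if_pos h, if_neg (asymm h)]; ring

lemma Dd_sub (x y : Finset V → ℤ) (t : Finset V) :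
    Dd (fun u => x u - y u) t = Dd x t - Dd y t := by
  unfold Dd
  rw [← Finset.sum_sub_distrib]
  exact Finset.sum_congr rfl fun v _ => by ring

lemma Dd_Dd (x : Finset V → ℤ) (t : Finset V) : Dd (Dd x) t = 0 := by
  unfold Dd
  have h1 : ∀ v ∈ tᶜ, sgn v t * ∑ u ∈ (insert v t)ᶜ, sgn u (insert v t) * x (insert u (insert v t))
      = ∑ u ∈ tᶜ, (if u ≠ v then sgn v t * (sgn u (insert v t) * x (insert u (insert v t))) else 0) := by
    intro v hv
    rw [Finset.mul_sum, Finset.compl_insert, ← Finset.filter_ne' tᶜ v, Finset.sum_filter]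
  rw [Finset.sum_congr rfl h1]
  set f : V → V → ℤ := fun a b =>
    (if b ≠ a then sgn a t * (sgn b (insert a t) * x (insert b (insert a t))) else 0) with hf
  have key : ∀ a ∈ tᶜ, ∀ b ∈ tᶜ, f a b = - f b a := by
    intro a ha b hb
    by_cases h : b = a
    · simp [hf, h]
    · rw [hf]; simp only []
      rw [if_pos h, if_pos (Ne.symm h)]
      rw [Finset.insert_comm b a t]
      have := sgn_swap t (Finset.mem_compl.1 ha) (Finset.mem_compl.1 hb) h
      linear_combination x (insert a (insert b t)) * this
  have hSS : ∑ a ∈ tᶜ, ∑ b ∈ tᶜ, f a b = -∑ a ∈ tᶜ, ∑ b ∈ tᶜ, f a b := by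
    conv_lhs => rw [Finset.sum_comm]
    rw [← Finset.sum_neg_distrib]
    refine Finset.sum_congr rfl fun b hb => ?_
    rw [← Finset.sum_neg_distrib]
    exact Finset.sum_congr rfl fun a ha => key a ha b hb
  linarith [hSS]


section Graph

variable (G : SimpleGraph V) [DecidableRel G.Adj] (I₀ : Finset V) (v₀ : V)

/-- `t` is a missing face: its complement is independent. -/
def Mg (t : Finset V) : Prop := IndepSet G tᶜ

instance (t : Finset V) : Decidable (Mg G t) := by unfold Mg; infer_instance

lemma indep_subset {s s' : Finset V} (h : IndepSet G s) (hsub : s' ⊆ s) : IndepSet G s' :=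
  fun u hu v hv => h u (hsub hu) v (hsub hv)

lemma Mg_mono {t s : Finset V} (h : Mg G t) (hsub : t ⊆ s) : Mg G s :=
  indep_subset G h (Finset.compl_subset_compl.2 hsub)

lemma Mg_insert {t : Finset V} (h : Mg G t) (v : V) : Mg G (insert v t) :=
  Mg_mono G h (Finset.subset_insert v t)

/-- restricted boundary (to missing faces) -/
def Qd (x : Finset V → ℤ) (t : Finset V) : ℤ := if Mg G t then Dd x t else 0

/-- class-preserving part of the restricted boundary -/
def Bop (x : Finset V → ℤ) (t : Finset V) : ℤ :=
  if Mg G t then ∑ v ∈ tᶜ.filter (· ∈ I₀), sgn v t * x (insert v t) else 0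

/-- level-raising part of the restricted boundary -/
def Aop (x : Finset V → ℤ) (t : Finset V) : ℤ :=
  if Mg G t then ∑ v ∈ tᶜ.filter (· ∉ I₀), sgn v t * x (insert v t) else 0

lemma Qd_split {t : Finset V} (x : Finset V → ℤ) (hm : Mg G t) :
    Qd G x t = Bop G I₀ x t + Aop G I₀ x t := by
  rw [Qd, Bop, Aop, if_pos hm, if_pos hm, if_pos hm, Dd,
    ← Finset.sum_filter_add_sum_filter_not tᶜ (· ∈ I₀)]

lemma Qd_sub (x y : Finset V → ℤ) (t : Finset V) :
    Qd G (fun u => x u - y u) t = Qd G x t - Qd G y t := by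
  unfold Qd
  split_ifs with h
  · exact Dd_sub x y t
  · ring

lemma Qd_add (x y : Finset V → ℤ) (t : Finset V) :
    Qd G (fun u => x u + y u) t = Qd G x t + Qd G y t := by
  unfold Qd
  split_ifs with h
  · unfold Dd; rw [← Finset.sum_add_distrib]
    exact Finset.sum_congr rfl fun v _ => by ring
  · ring

lemma Qd_Qd (x : Finset V → ℤ) (t : Finset V) : Qd G (Qd G x) t = 0 := by
  unfold Qd
  split_ifs with h
  · have : Dd (fun u => if Mg G u then Dd x u else 0) t = Dd (Dd x) t := by
      rw [Dd, Dd]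
      refine Finset.sum_congr rfl fun v hv => ?_
      have hmg := Mg_insert G h v
      simp only [hmg, if_true]
    rw [this]
    exact Dd_Dd x t
  · rfl

/-- the set of available apexes for the class of `t` -/
def AfunW (W : Finset V) : Finset V := I₀.filter fun a => ∀ w ∈ W, ¬ G.Adj w a

def Afun (t : Finset V) : Finset V := AfunW G I₀ (tᶜ \ I₀)

noncomputable def apex (t : Finset V) : V :=
  if h : (Afun G I₀ t).Nonempty then (Afun G I₀ t).min' h else v₀

/-- the classwise cone homotopy -/
noncomputable def hop (x : Finset V → ℤ) (t : Finset V) : ℤ :=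
  if Mg G t ∧ (Afun G I₀ t).Nonempty ∧ apex G I₀ v₀ t ∈ t then
    sgn (apex G I₀ v₀ t) (t.erase (apex G I₀ v₀ t)) * x (t.erase (apex G I₀ v₀ t))
  else 0

lemma apex_mem_I₀ {t : Finset V} (h : (Afun G I₀ t).Nonempty) : apex G I₀ v₀ t ∈ I₀ := by
  rw [apex, dif_pos h]
  exact Finset.mem_of_mem_filter _ ((Afun G I₀ t).min'_mem h)

lemma apex_not_adj {t : Finset V} (h : (Afun G I₀ t).Nonempty) :
    ∀ w ∈ tᶜ \ I₀, ¬ G.Adj w (apex G I₀ v₀ t) := by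
  have := (Afun G I₀ t).min'_mem h
  simp only [Afun, AfunW, Finset.mem_filter] at this
  rw [apex, dif_pos h]
  exact this.2

lemma class_insert {t : Finset V} {v : V} (hv : v ∈ I₀) :
    (insert v t)ᶜ \ I₀ = tᶜ \ I₀ := by
  ext x
  simp only [Finset.mem_sdiff, Finset.mem_compl, Finset.mem_insert]
  constructor
  · rintro ⟨h1, h2⟩; exact ⟨fun hx => h1 (Or.inr hx), h2⟩
  · rintro ⟨h1, h2⟩
    refine ⟨fun hx => ?_, h2⟩
    rcases hx with rfl | hx
    · exact h2 hv
    · exact h1 hx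

lemma class_erase {t : Finset V} {a : V} (ha : a ∈ I₀) :
    (t.erase a)ᶜ \ I₀ = tᶜ \ I₀ := by
  ext x
  simp only [Finset.mem_sdiff, Finset.mem_compl, Finset.mem_erase]
  constructor
  · rintro ⟨h1, h2⟩
    refine ⟨fun hx => h1 ⟨fun hxa => ?_, hx⟩, h2⟩
    subst hxa; exact h2 ha
  · rintro ⟨h1, h2⟩; exact ⟨fun hx => h1 hx.2, h2⟩

lemma Afun_congr {t s : Finset V} (h : tᶜ \ I₀ = sᶜ \ I₀) : Afun G I₀ t = Afun G I₀ s := by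
  show AfunW G I₀ (tᶜ \ I₀) = AfunW G I₀ (sᶜ \ I₀)
  rw [h]

lemma apex_congr {t s : Finset V} (h : tᶜ \ I₀ = sᶜ \ I₀) :
    apex G I₀ v₀ t = apex G I₀ v₀ s := by
  have hA := Afun_congr G I₀ h
  unfold apex
  simp only [hA]

/-- level of a face -/
def lev (t : Finset V) : ℕ := (tᶜ \ I₀).card

lemma lev_insert_mem {t : Finset V} {v : V} (hv : v ∈ I₀) :
    lev I₀ (insert v t) = lev I₀ t := by rw [lev, lev, class_insert I₀ hv]

lemma lev_erase {t : Finset V} {a : V} (ha : a ∈ I₀) :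
    lev I₀ (t.erase a) = lev I₀ t := by rw [lev, lev, class_erase I₀ ha]

lemma lev_insert_not {t : Finset V} {v : V} (hv : v ∉ I₀) (hvt : v ∉ t) :
    lev I₀ (insert v t) + 1 = lev I₀ t := by
  rw [lev, lev, Finset.compl_insert]
  have hv' : v ∈ tᶜ \ I₀ := Finset.mem_sdiff.2 ⟨Finset.mem_compl.2 hvt, hv⟩
  rw [Finset.erase_sdiff_comm]
  exact Finset.card_erase_add_one hv'

lemma lev_le (t : Finset V) : lev I₀ t ≤ tᶜ.card :=
  Finset.card_le_card (Finset.sdiff_subset)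

lemma Mg_erase_apex {t : Finset V} (hI : IndepSet G I₀) (hm : Mg G t)
    (hne : (Afun G I₀ t).Nonempty) (hat : apex G I₀ v₀ t ∈ t) :
    Mg G (t.erase (apex G I₀ v₀ t)) := by
  set a := apex G I₀ v₀ t with ha
  have haI : a ∈ I₀ := apex_mem_I₀ G I₀ v₀ hne
  have haNA := apex_not_adj G I₀ v₀ hne
  unfold Mg
  rw [Finset.compl_erase]
  intro u hu v hv
  have key : ∀ w, w ∈ tᶜ → ¬ G.Adj a w := by
    intro w hw hadj
    by_cases hwI : w ∈ I₀
    · exact hI a haI w hwI hadj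
    · exact haNA w (Finset.mem_sdiff.2 ⟨hw, hwI⟩) hadj.symm
  rcases Finset.mem_insert.1 hu with rfl | hu' <;> rcases Finset.mem_insert.1 hv with rfl | hv'
  · exact G.loopless.irrefl _
  · exact key v hv'
  · exact fun hadj => key u hu' hadj.symm
  · exact hm u hu' v hv'

lemma hop_Bop_id (hI : IndepSet G I₀) (x : Finset V → ℤ) (t : Finset V)
    (hm : Mg G t) (hne : (Afun G I₀ t).Nonempty) :
    Bop G I₀ (hop G I₀ v₀ x) t + hop G I₀ v₀ (Bop G I₀ x) t = x t := by
  set a := apex G I₀ v₀ t with ha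
  have haI : a ∈ I₀ := apex_mem_I₀ G I₀ v₀ hne
  by_cases hat : a ∈ t
  · -- apex inside the face
    have hMg' : Mg G (t.erase a) := Mg_erase_apex G I₀ v₀ hI hm hne hat
    have hterm2 : hop G I₀ v₀ (Bop G I₀ x) t
        = sgn a (t.erase a) * Bop G I₀ x (t.erase a) := by
      rw [hop, if_pos ⟨hm, hne, (by rw [← ha]; exact hat)⟩, ← ha]
    have hcompl : (t.erase a)ᶜ.filter (· ∈ I₀) = insert a (tᶜ.filter (· ∈ I₀)) := by
      rw [Finset.compl_erase, Finset.filter_insert, if_pos haI]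
    have hBop' : Bop G I₀ x (t.erase a)
        = sgn a (t.erase a) * x t + ∑ u ∈ tᶜ.filter (· ∈ I₀), sgn u (t.erase a) * x (insert u (t.erase a)) := by
      rw [Bop, if_pos hMg', hcompl, Finset.sum_insert (by
        intro hc
        exact (Finset.mem_compl.1 (Finset.mem_filter.1 hc).1) hat),
        Finset.insert_erase hat]
    have hterm1 : Bop G I₀ (hop G I₀ v₀ x) t
        = ∑ v ∈ tᶜ.filter (· ∈ I₀), sgn v t * (sgn a ((insert v t).erase a) * x (insert v (t.erase a))) := by
      rw [Bop, if_pos hm]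
      refine Finset.sum_congr rfl fun v hv => ?_
      have hvc := Finset.mem_filter.1 hv
      have hvt : v ∉ t := Finset.mem_compl.1 hvc.1
      have hvI : v ∈ I₀ := hvc.2
      have hclass := class_insert I₀ (t := t) hvI
      have hapex : apex G I₀ v₀ (insert v t) = a := by
        rw [ha]; exact apex_congr G I₀ v₀ hclass
      have hva : v ≠ a := fun hc => hvt (hc ▸ hat)
      have herase : (insert v t).erase a = insert v (t.erase a) :=
        Finset.erase_insert_of_ne hva
      rw [hop, if_pos ⟨Mg_insert G hm v, (by rw [Afun_congr G I₀ hclass]; exact hne),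
        (by rw [hapex]; exact Finset.mem_insert_of_mem hat)⟩, hapex, herase]
    rw [hterm1, hterm2, hBop', mul_add, ← mul_assoc, sgn_mul_self, one_mul, Finset.mul_sum]
    have hz : ∀ v ∈ tᶜ.filter (· ∈ I₀),
        sgn v t * (sgn a ((insert v t).erase a) * x (insert v (t.erase a)))
        = - (sgn a (t.erase a) * (sgn v (t.erase a) * x (insert v (t.erase a)))) := by
      intro v hv
      have hvc := Finset.mem_filter.1 hv
      have hvt : v ∉ t := Finset.mem_compl.1 hvc.1
      have hva : v ≠ a := fun hc => hvt (hc ▸ hat)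
      have hvt' : v ∉ t.erase a := fun hc => hvt (Finset.mem_of_mem_erase hc)
      have herase : (insert v t).erase a = insert v (t.erase a) :=
        Finset.erase_insert_of_ne hva
      have hteq : t = insert a (t.erase a) := (Finset.insert_erase hat).symm
      have h1 : sgn v t = (if a < v then -1 else 1) * sgn v (t.erase a) := by
        conv_lhs => rw [hteq]
        exact sgn_insert _ (Finset.notMem_erase a t) hva
      have h2 : sgn a (insert v (t.erase a)) = (if v < a then -1 else 1) * sgn a (t.erase a) :=
        sgn_insert _ hvt' (Ne.symm hva)
      rw [herase, h1, h2]
      rcases lt_or_gt_of_ne hva with h | h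
      · rw [if_neg (asymm h), if_pos h]; ring
      · rw [if_pos h, if_neg (asymm h)]; ring
    rw [Finset.sum_congr rfl hz]
    rw [Finset.sum_neg_distrib]
    ring
  · -- apex outside the face
    have hterm2 : hop G I₀ v₀ (Bop G I₀ x) t = 0 := by
      rw [hop, if_neg (fun hc => hat (by rw [ha]; exact hc.2.2))]
    have hmem : a ∈ tᶜ.filter (· ∈ I₀) :=
      Finset.mem_filter.2 ⟨Finset.mem_compl.2 hat, haI⟩
    have hterm1 : Bop G I₀ (hop G I₀ v₀ x) t = sgn a t * (sgn a t * x t) := by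
      rw [Bop, if_pos hm]
      rw [Finset.sum_eq_single_of_mem a hmem ?side]
      case side =>
        intro v hv hva
        have hvc := Finset.mem_filter.1 hv
        have hvt : v ∉ t := Finset.mem_compl.1 hvc.1
        have hclass := class_insert I₀ (t := t) hvc.2
        have hapex : apex G I₀ v₀ (insert v t) = a := by
          rw [ha]; exact apex_congr G I₀ v₀ hclass
        have : hop G I₀ v₀ x (insert v t) = 0 := by
          rw [hop, if_neg]
          intro hc
          rcases Finset.mem_insert.1 (hapex ▸ hc.2.2) with h | h
          · exact hva h.symm
          · exact hat h
        rw [this, mul_zero]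
      have hclass := class_insert I₀ (t := t) haI
      have hapex : apex G I₀ v₀ (insert a t) = a := by
        rw [ha]; exact apex_congr G I₀ v₀ hclass
      have : hop G I₀ v₀ x (insert a t) = sgn a t * x t := by
        rw [hop, if_pos ⟨Mg_insert G hm a, (by rw [Afun_congr G I₀ hclass]; exact hne),
          (by rw [hapex]; exact Finset.mem_insert_self a t)⟩, hapex,
          Finset.erase_insert hat]
      rw [this]
    rw [hterm1, hterm2, add_zero, ← mul_assoc, sgn_mul_self, one_mul]

lemma Afun_nonempty {p : ℕ} (hdom : ∀ W : Finset V, W.card ≤ p → ¬ Dominates G W I₀)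
    {t : Finset V} (h : (tᶜ \ I₀).card ≤ p) : (Afun G I₀ t).Nonempty := by
  have hnd := hdom _ h
  unfold Dominates at hnd
  push_neg at hnd
  obtain ⟨a, haI, hcond⟩ := hnd
  refine ⟨a, ?_⟩
  simp only [Afun, AfunW, Finset.mem_filter]
  exact ⟨haI, fun w hw hadj => hcond.2 w hw hadj⟩

def h0 (x₀ : V) (x : Finset V → ℤ) (t : Finset V) : ℤ :=
  if x₀ ∈ t then x (t.erase x₀) else 0

lemma sgn_bot (x₀ : V) (hx₀ : ∀ y : V, x₀ ≤ y) (s : Finset V) : sgn x₀ s = 1 := by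
  unfold sgn
  rw [Finset.filter_eq_empty_iff.2 (fun a _ => not_lt.2 (hx₀ a))]
  simp

lemma h0_id (x₀ : V) (hx₀ : ∀ y : V, x₀ ≤ y) (x : Finset V → ℤ) (t : Finset V) :
    Dd (h0 x₀ x) t + h0 x₀ (Dd x) t = x t := by
  by_cases hx : x₀ ∈ t
  · have hterm2 : h0 x₀ (Dd x) t
        = sgn x₀ (t.erase x₀) * x (insert x₀ (t.erase x₀))
          + ∑ u ∈ tᶜ, sgn u (t.erase x₀) * x (insert u (t.erase x₀)) := by
      rw [h0, if_pos hx, Dd, Finset.compl_erase,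
        Finset.sum_insert (fun hc => (Finset.mem_compl.1 hc) hx)]
    have hterm1 : Dd (h0 x₀ x) t
        = ∑ v ∈ tᶜ, sgn v t * x (insert v (t.erase x₀)) := by
      rw [Dd]
      refine Finset.sum_congr rfl fun v hv => ?_
      have hvt : v ∉ t := Finset.mem_compl.1 hv
      have hvx : v ≠ x₀ := fun hc => hvt (hc ▸ hx)
      rw [h0, if_pos (Finset.mem_insert_of_mem hx), Finset.erase_insert_of_ne hvx]
    rw [hterm1, hterm2, sgn_bot x₀ hx₀, Finset.insert_erase hx, one_mul]
    have hz : ∀ v ∈ tᶜ, sgn v (t.erase x₀) = - sgn v t := by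
      intro v hv
      have hvt : v ∉ t := Finset.mem_compl.1 hv
      have hvx : v ≠ x₀ := fun hc => hvt (hc ▸ hx)
      have h1 : sgn v t = (if x₀ < v then -1 else 1) * sgn v (t.erase x₀) := by
        conv_lhs => rw [(Finset.insert_erase hx).symm]
        exact sgn_insert _ (Finset.notMem_erase x₀ t) hvx
      rw [h1, if_pos (lt_of_le_of_ne (hx₀ v) (fun hc => hvx hc.symm))]
      ring
    have : ∑ u ∈ tᶜ, sgn u (t.erase x₀) * x (insert u (t.erase x₀))
        = - ∑ v ∈ tᶜ, sgn v t * x (insert v (t.erase x₀)) := by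
      rw [← Finset.sum_neg_distrib]
      exact Finset.sum_congr rfl fun v hv => by rw [hz v hv]; ring
    rw [this]; ring
  · have hterm2 : h0 x₀ (Dd x) t = 0 := by rw [h0, if_neg hx]
    have hterm1 : Dd (h0 x₀ x) t = x t := by
      rw [Dd, Finset.sum_eq_single_of_mem x₀ (Finset.mem_compl.2 hx) ?side]
      case side =>
        intro v hv hvx
        have : h0 x₀ x (insert v t) = 0 := by
          rw [h0, if_neg]
          intro hc
          rcases Finset.mem_insert.1 hc with h | h
          · exact hvx h.symm
          · exact hx h
        rw [this, mul_zero]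
      rw [h0, if_pos (Finset.mem_insert_self x₀ t), Finset.erase_insert hx,
        sgn_bot x₀ hx₀, one_mul]
    rw [hterm1, hterm2, add_zero]

lemma Qd_zero_fun (t : Finset V) : Qd G (fun _ => (0:ℤ)) t = 0 := by
  unfold Qd Dd
  split_ifs with h
  · exact Finset.sum_eq_zero fun v _ => by ring
  · rfl

include v₀ in
lemma Lmain (hI : IndepSet G I₀) {p : ℕ}
    (hdom : ∀ W : Finset V, W.card ≤ p → ¬ Dominates G W I₀) :
    ∀ ℓ M (β : Finset V → ℤ),
    (∀ t, β t ≠ 0 → Mg G t ∧ t.card = M ∧ tᶜ.card ≤ p ∧ p + 1 ≤ lev I₀ t + ℓ) →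
    (∀ t, Qd G β t = 0) →
    ∃ y : Finset V → ℤ, (∀ t, y t ≠ 0 → t.card = M + 1) ∧ (∀ t, Qd G y t = β t) := by
  intro ℓ
  induction ℓ with
  | zero =>
    intro M β hsupp hcyc
    have hβ0 : ∀ t, β t = 0 := by
      intro t
      by_contra h
      obtain ⟨_, _, hc, hl⟩ := hsupp t h
      have := lev_le I₀ t
      omega
    refine ⟨fun _ => 0, fun t h => absurd rfl h, fun t => ?_⟩
    rw [hβ0 t]
    exact Qd_zero_fun G t
  | succ ℓ ih =>
    intro M β hsupp hcyc
    set ℓ₀ := p - ℓ with hℓ₀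
    set β₀ : Finset V → ℤ := fun t => if lev I₀ t = ℓ₀ then β t else 0 with hβ₀
    set y₁ := hop G I₀ v₀ β₀ with hy₁
    -- support of y₁
    have hy₁supp : ∀ s, y₁ s ≠ 0 →
        Mg G s ∧ s.card = M + 1 ∧ sᶜ.card + 1 ≤ p ∧ lev I₀ s = ℓ₀ := by
      intro s hs
      rw [hy₁, hop] at hs
      by_cases hg : Mg G s ∧ (Afun G I₀ s).Nonempty ∧ apex G I₀ v₀ s ∈ s
      swap
      · rw [if_neg hg] at hs; exact absurd rfl hs
      rw [if_pos hg] at hs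
      obtain ⟨hmg, hne, hat⟩ := hg
      set a := apex G I₀ v₀ s with ha
      have haI : a ∈ I₀ := apex_mem_I₀ G I₀ v₀ hne
      have hβ₀ne : β₀ (s.erase a) ≠ 0 := fun hc => hs (by rw [hc, mul_zero])
      have hβne : β (s.erase a) ≠ 0 := by
        intro hc
        apply hβ₀ne
        rw [hβ₀]
        simp only [hc, ite_self]
      have hlev0 : lev I₀ (s.erase a) = ℓ₀ := by
        by_contra hc
        apply hβ₀ne
        rw [hβ₀]
        simp only [if_neg hc]
      obtain ⟨h1, h2, h3, h4⟩ := hsupp _ hβne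
      refine ⟨hmg, ?_, ?_, ?_⟩
      · rw [← Finset.card_erase_add_one hat, h2]
      · have : (s.erase a)ᶜ = insert a sᶜ := Finset.compl_erase
        rw [this, Finset.card_insert_of_notMem (by simp [hat])] at h3
        omega
      · rw [← lev_erase I₀ haI, hlev0]
    -- support of Qd y₁
    have hQdy₁supp : ∀ t, Qd G y₁ t ≠ 0 →
        Mg G t ∧ t.card = M ∧ tᶜ.card ≤ p ∧ lev I₀ t ≤ ℓ₀ + 1 := by
      intro t ht
      rw [Qd] at ht
      by_cases hmg : Mg G t
      swap
      · rw [if_neg hmg] at ht; exact absurd rfl ht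
      rw [if_pos hmg] at ht
      obtain ⟨v, hv, hvne⟩ := Finset.exists_ne_zero_of_sum_ne_zero ht
      have hy : y₁ (insert v t) ≠ 0 := fun hc => hvne (by rw [hc, mul_zero])
      obtain ⟨h1, h2, h3, h4⟩ := hy₁supp _ hy
      have hvt : v ∉ t := Finset.mem_compl.1 hv
      have hcard : t.card = M := by
        rw [Finset.card_insert_of_notMem hvt] at h2
        omega
      have hcompl : (insert v t)ᶜ.card + 1 = tᶜ.card := by
        rw [Finset.compl_insert]
        exact Finset.card_erase_add_one hv
      refine ⟨hmg, hcard, by omega, ?_⟩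
      by_cases hvI : v ∈ I₀
      · rw [← lev_insert_mem I₀ (t := t) hvI, h4]; omega
      · have := lev_insert_not I₀ hvI hvt
        omega
    -- the new β'
    set β' : Finset V → ℤ := fun t => β t - Qd G y₁ t with hβ'
    have hβ'eval : ∀ t, β' t = β t - Qd G y₁ t := fun t => rfl
    have hcyc' : ∀ t, Qd G β' t = 0 := by
      intro t
      rw [hβ', Qd_sub, hcyc, Qd_Qd]
      ring
    have hsupp' : ∀ t, β' t ≠ 0 →
        Mg G t ∧ t.card = M ∧ tᶜ.card ≤ p ∧ p + 1 ≤ lev I₀ t + ℓ := by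
      intro t ht
      rw [hβ'eval] at ht
      have hbasic : Mg G t ∧ t.card = M ∧ tᶜ.card ≤ p := by
        by_cases hβt : β t = 0
        · have hQ : Qd G y₁ t ≠ 0 := fun hc => ht (by rw [hβt, hc, sub_zero])
          obtain ⟨h1, h2, h3, _⟩ := hQdy₁supp t hQ
          exact ⟨h1, h2, h3⟩
        · obtain ⟨h1, h2, h3, _⟩ := hsupp t hβt
          exact ⟨h1, h2, h3⟩
      refine ⟨hbasic.1, hbasic.2.1, hbasic.2.2, ?_⟩
      by_contra hlev
      push_neg at hlev
      have hlt : lev I₀ t ≤ ℓ₀ := by omega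
      -- auxiliary: y₁ vanishes off level ℓ₀
      have hylev : ∀ s, lev I₀ s ≠ ℓ₀ → y₁ s = 0 := by
        intro s hsl
        by_contra hc
        exact hsl (hy₁supp s hc).2.2.2
      rcases lt_or_eq_of_le hlt with hlt' | heq
      · -- strictly below the working level : everything vanishes
        have hβt : β t = 0 := by
          by_contra hc
          have := (hsupp t hc).2.2.2
          omega
        have hQd0 : Qd G y₁ t = 0 := by
          rw [Qd]
          split_ifs with hmg
          · refine Finset.sum_eq_zero fun v hv => ?_
            have hvt : v ∉ t := Finset.mem_compl.1 hv
            have : y₁ (insert v t) = 0 := by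
              apply hylev
              by_cases hvI : v ∈ I₀
              · rw [lev_insert_mem I₀ hvI]; omega
              · have := lev_insert_not I₀ hvI hvt; omega
            rw [this, mul_zero]
          · rfl
        exact ht (by rw [hβt, hQd0, sub_zero])
      · -- exactly the working level
        by_cases hmg : Mg G t
        swap
        · have hβt : β t = 0 := by
            by_contra hc; exact hmg (hsupp t hc).1
          have hQd0 : Qd G y₁ t = 0 := by rw [Qd, if_neg hmg]
          exact ht (by rw [hβt, hQd0, sub_zero])
        have hlevcard : (tᶜ \ I₀).card ≤ p := by
          have : lev I₀ t = (tᶜ \ I₀).card := rfl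
          omega
        have hne : (Afun G I₀ t).Nonempty := Afun_nonempty G I₀ hdom hlevcard
        have hsplit := Qd_split G I₀ y₁ hmg
        have hAop : Aop G I₀ y₁ t = 0 := by
          rw [Aop, if_pos hmg]
          refine Finset.sum_eq_zero fun v hv => ?_
          have hvdef := Finset.mem_filter.1 hv
          have hvt : v ∉ t := Finset.mem_compl.1 hvdef.1
          have hlv := lev_insert_not I₀ hvdef.2 hvt
          have : y₁ (insert v t) = 0 := by
            apply hylev
            omega
          rw [this, mul_zero]
        have hid := hop_Bop_id G I₀ v₀ hI β₀ t hmg hne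
        rw [← hy₁] at hid
        -- β' t = hop (Bop β₀) t
        have hβ₀t : β₀ t = β t := by rw [hβ₀]; simp [heq]
        have hβ't : β' t = hop G I₀ v₀ (Bop G I₀ β₀) t := by
          rw [hβ'eval, hsplit, hAop, add_zero]
          have : Bop G I₀ y₁ t = β₀ t - hop G I₀ v₀ (Bop G I₀ β₀) t := by omega
          rw [this, hβ₀t]
          ring
        -- show the rhs vanishes
        have hz : hop G I₀ v₀ (Bop G I₀ β₀) t = 0 := by
          rw [hop]
          split_ifs with hg
          swap
          · rfl
          obtain ⟨hmg2, hne2, hat⟩ := hg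
          have haI : apex G I₀ v₀ t ∈ I₀ := apex_mem_I₀ G I₀ v₀ hne2
          set a := apex G I₀ v₀ t with ha
          have hMg' : Mg G (t.erase a) := Mg_erase_apex G I₀ v₀ hI hmg2 hne2 hat
          have hlevt' : lev I₀ (t.erase a) = ℓ₀ := by rw [lev_erase I₀ haI]; omega
          have hBB : Bop G I₀ β₀ (t.erase a) = Bop G I₀ β (t.erase a) := by
            rw [Bop, Bop, if_pos hMg', if_pos hMg']
            refine Finset.sum_congr rfl fun u hu => ?_
            have huI : u ∈ I₀ := (Finset.mem_filter.1 hu).2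
            have hlev : lev I₀ (insert u (t.erase a)) = ℓ₀ := by
              rw [lev_insert_mem I₀ huI]; exact hlevt'
            rw [hβ₀]
            simp [hlev]
          have hsplit' := Qd_split G I₀ β hMg'
          have hAop' : Aop G I₀ β (t.erase a) = 0 := by
            rw [Aop, if_pos hMg']
            refine Finset.sum_eq_zero fun v hv => ?_
            have hvdef := Finset.mem_filter.1 hv
            have hvt' : v ∉ t.erase a := Finset.mem_compl.1 hvdef.1
            have hlv := lev_insert_not I₀ hvdef.2 hvt'
            have : β (insert v (t.erase a)) = 0 := by
              by_contra hc
              have h4 := (hsupp _ hc).2.2.2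
              omega
            rw [this, mul_zero]
          have : Bop G I₀ β (t.erase a) = 0 := by
            have := hcyc (t.erase a)
            omega
          rw [hBB, this, mul_zero]
        have hfin : β t - Qd G y₁ t = 0 := by
          rw [← hβ'eval, hβ't, hz]
        exact ht hfin
    obtain ⟨y', hy'card, hy'⟩ := ih M β' hsupp' hcyc'
    refine ⟨fun u => y₁ u + y' u, ?_, ?_⟩
    · intro t h
      by_cases h1 : y₁ t = 0
      · by_cases h2 : y' t = 0
        · exact absurd (by show y₁ t + y' t = 0; rw [h1, h2, add_zero]) h
        · exact hy'card t h2
      · exact (hy₁supp t h1).2.1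
    · intro t
      rw [Qd_add, hy' t, hβ'eval]
      ring

end Graph

end NCAux

namespace NCAux

section Conv

variable (G : SimpleGraph V) [DecidableRel G.Adj]

/-- extension of a chain (on faces of `K` of cardinality `k`) by zero -/
def ext (K : Finset (Finset V)) (k : ℕ) (c : chainC K k) : Finset V → ℤ :=
  fun t => if h : t ∈ K ∧ t.card = k then c ⟨t, h⟩ else 0

lemma mem_NC {t : Finset V} : t ∈ NC G ↔ ¬ Mg G t := by
  simp [NC, Mg, Finset.mem_filter]

lemma ext_support (K : Finset (Finset V)) (k : ℕ) (c : chainC K k) {t : Finset V}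
    (h : ext K k c t ≠ 0) : t ∈ K ∧ t.card = k := by
  by_contra hc
  rw [ext, dif_neg hc] at h
  exact h rfl

lemma bdry_eq_Dd (K : Finset (Finset V)) (k : ℕ) (c : chainC K (k+1)) {t : Finset V}
    (ht : t ∈ K) (htc : t.card = k) :
    bdry K k c ⟨t, ht, htc⟩ = Dd (ext K (k+1) c) t := by
  show (∑ s : {s : Finset V // s ∈ K ∧ s.card = k+1},
      if t ⊆ s.1 then (∑ v ∈ s.1 \ t, (-1:ℤ)^(t.filter (· < v)).card) * c s else 0) = _
  set g : Finset V → ℤ := fun u =>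
    if t ⊆ u then (∑ v ∈ u \ t, (-1:ℤ)^(t.filter (· < v)).card) * ext K (k+1) c u else 0 with hg
  have step1 : ∀ s : {s : Finset V // s ∈ K ∧ s.card = k+1},
      (if t ⊆ s.1 then (∑ v ∈ s.1 \ t, (-1:ℤ)^(t.filter (· < v)).card) * c s else 0) = g s.1 := by
    intro s
    rw [hg]
    simp only [ext]
    rw [dif_pos s.2]
  rw [Finset.sum_congr rfl (fun s _ => step1 s)]
  have hmem : ∀ u : Finset V, u ∈ Finset.univ.filter (fun u : Finset V => u ∈ K ∧ u.card = k+1)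
      ↔ (u ∈ K ∧ u.card = k+1) := by
    intro u; simp
  rw [← Finset.sum_subtype _ hmem g]
  -- now a sum over a Finset of Finsets
  rw [show Dd (ext K (k+1) c) t = ∑ v ∈ tᶜ, sgn v t * ext K (k+1) c (insert v t) from rfl]
  have hL : ∑ u ∈ Finset.univ.filter (fun u : Finset V => u ∈ K ∧ u.card = k+1), g u
      = ∑ u ∈ (Finset.univ.filter (fun u : Finset V => u ∈ K ∧ u.card = k+1)).filter (fun u => t ⊆ u), g u := by
    refine (Finset.sum_subset (Finset.filter_subset _ _) ?_).symm
    intro u hu hnu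
    rw [hg]
    simp only []
    rw [if_neg]
    intro hc
    exact hnu (Finset.mem_filter.2 ⟨hu, hc⟩)
  have hR : ∑ v ∈ tᶜ, sgn v t * ext K (k+1) c (insert v t)
      = ∑ v ∈ tᶜ.filter (fun v => insert v t ∈ K), sgn v t * ext K (k+1) c (insert v t) := by
    refine (Finset.sum_subset (Finset.filter_subset _ _) ?_).symm
    intro v hv hnv
    have : ext K (k+1) c (insert v t) = 0 := by
      rw [ext, dif_neg]
      intro hc
      exact hnv (Finset.mem_filter.2 ⟨hv, hc.1⟩)
    rw [this, mul_zero]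
  rw [hL, hR]
  refine (Finset.sum_bij (fun v _ => insert v t) ?hi ?inj ?surj ?val).symm
  case hi =>
    intro v hv
    have hv1 := Finset.mem_filter.1 hv
    have hvt : v ∉ t := Finset.mem_compl.1 hv1.1
    refine Finset.mem_filter.2 ⟨Finset.mem_filter.2 ⟨Finset.mem_univ _, hv1.2, ?_⟩,
      Finset.subset_insert v t⟩
    rw [Finset.card_insert_of_notMem hvt, htc]
  case inj =>
    intro v hv w hw hvw
    have hvw' : insert v t = insert w t := hvw
    have hv1 := Finset.mem_filter.1 hv
    have hvt : v ∉ t := Finset.mem_compl.1 hv1.1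
    have : v ∈ insert w t := hvw' ▸ Finset.mem_insert_self v t
    rcases Finset.mem_insert.1 this with h | h
    · exact h
    · exact absurd h hvt
  case surj =>
    intro u hu
    have hu1 := Finset.mem_filter.1 hu
    have htu : t ⊆ u := hu1.2
    have hucard : u.card = k + 1 := (Finset.mem_filter.1 hu1.1).2.2
    have huK : u ∈ K := (Finset.mem_filter.1 hu1.1).2.1
    have hsd : (u \ t).card = 1 := by
      rw [Finset.card_sdiff_of_subset htu, hucard, htc]
      omega
    obtain ⟨v, hv⟩ := Finset.card_eq_one.1 hsd
    have hvu : v ∈ u := (Finset.mem_sdiff.1 (hv ▸ Finset.mem_singleton_self v)).1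
    have hvt : v ∉ t := (Finset.mem_sdiff.1 (hv ▸ Finset.mem_singleton_self v)).2
    have heq : insert v t = u := by
      apply Finset.Subset.antisymm
      · exact Finset.insert_subset hvu htu
      · intro w hw
        by_cases hwt : w ∈ t
        · exact Finset.mem_insert_of_mem hwt
        · have : w ∈ u \ t := Finset.mem_sdiff.2 ⟨hw, hwt⟩
          rw [hv, Finset.mem_singleton] at this
          exact this ▸ Finset.mem_insert_self v t
    refine ⟨v, Finset.mem_filter.2 ⟨Finset.mem_compl.2 hvt, heq ▸ huK⟩, heq⟩
  case val =>
    intro v hv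
    have hv1 := Finset.mem_filter.1 hv
    have hvt : v ∉ t := Finset.mem_compl.1 hv1.1
    rw [hg]
    simp only []
    rw [if_pos (Finset.subset_insert v t)]
    have hsd : insert v t \ t = {v} := by
      ext w
      simp only [Finset.mem_sdiff, Finset.mem_insert, Finset.mem_singleton]
      constructor
      · rintro ⟨h1 | h1, h2⟩
        · exact h1
        · exact absurd h1 h2
      · rintro rfl
        exact ⟨Or.inl rfl, hvt⟩
    rw [hsd, Finset.sum_singleton]
    rfl

end Conv
end NCAux

/-- For a graph `G` on `n` vertices with at least one edge,
`H̃_j(NC(G)) = 0` for all `j ≥ n - iγ(G) - 1`. -/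
theorem noncover_complex_homology_vanishes (G : SimpleGraph V) [DecidableRel G.Adj]
    (hE : ∃ u v, G.Adj u v) :
    ∀ j : ℤ, (Fintype.card V : ℤ) - igamma G - 1 ≤ j → RHomVanishes (NC G) j := by
  classical
  intro j hj
  obtain ⟨u, v, huv⟩ := hE
  have hneV : (Finset.univ : Finset V).Nonempty := ⟨u, Finset.mem_univ u⟩
  -- facts about igamma
  have higdef : igamma G = sInf {k | ∀ I : Finset V, IndepSet G I →
      ∃ W : Finset V, W.card ≤ k ∧ Dominates G W I} := rfl
  have hnS : Fintype.card V ∈ {k | ∀ I : Finset V, IndepSet G I →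
      ∃ W : Finset V, W.card ≤ k ∧ Dominates G W I} := by
    intro I hI
    exact ⟨I, (Finset.card_le_univ I).trans_eq Finset.card_univ, fun a ha => Or.inl ha⟩
  have h0S : 0 ∉ {k | ∀ I : Finset V, IndepSet G I →
      ∃ W : Finset V, W.card ≤ k ∧ Dominates G W I} := by
    intro h
    have hsingle : IndepSet G {u} := by
      intro x hx y hy
      rw [Finset.mem_singleton] at hx hy
      subst hx; subst hy
      exact G.loopless.irrefl _
    obtain ⟨W, hW0, hWdom⟩ := h {u} hsingle
    have hWe : W = ∅ := Finset.card_eq_zero.1 (Nat.le_zero.1 hW0)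
    subst hWe
    rcases hWdom u (Finset.mem_singleton_self u) with h' | ⟨w, hw, _⟩
    · exact absurd h' (Finset.notMem_empty u)
    · exact absurd hw (Finset.notMem_empty w)
  have higS : igamma G ∈ {k | ∀ I : Finset V, IndepSet G I →
      ∃ W : Finset V, W.card ≤ k ∧ Dominates G W I} := by
    rw [higdef]
    exact Nat.sInf_mem ⟨_, hnS⟩
  have hig1 : 1 ≤ igamma G := by
    rcases Nat.eq_zero_or_pos (igamma G) with h | h
    · exact absurd (h ▸ higS) h0S
    · exact h
  have hign : igamma G ≤ Fintype.card V - 1 := by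
    rw [higdef]
    apply Nat.sInf_le
    intro I hI
    refine ⟨Finset.univ.erase u, ?_, ?_⟩
    · rw [Finset.card_erase_of_mem (Finset.mem_univ u), Finset.card_univ]
    · intro a ha
      by_cases hau : a = u
      · subst hau
        exact Or.inr ⟨v, Finset.mem_erase.2 ⟨(G.ne_of_adj huv).symm, Finset.mem_univ v⟩, huv.symm⟩
      · exact Or.inl (Finset.mem_erase.2 ⟨hau, Finset.mem_univ a⟩)
  have hn1 : 1 ≤ Fintype.card V := by
    have : Nonempty V := ⟨u⟩
    exact Fintype.card_pos
  have hj0 : 0 ≤ j := by omega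
  unfold RHomVanishes
  rw [if_neg (by omega : ¬ j ≤ -2), if_neg (by omega : ¬ j = -1)]
  · set J := j.toNat with hJ
    have hJj : (J : ℤ) = j := Int.toNat_of_nonneg hj0
    intro c hc
    set p := igamma G - 1 with hp
    have hpS : p ∉ {k | ∀ I : Finset V, IndepSet G I →
        ∃ W : Finset V, W.card ≤ k ∧ Dominates G W I} := by
      intro hmem
      have hle : igamma G ≤ p := by rw [higdef]; exact Nat.sInf_le hmem
      omega
    have hex : ∃ I₀ : Finset V, IndepSet G I₀ ∧
        ∀ W : Finset V, W.card ≤ p → ¬ Dominates G W I₀ := by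
      by_contra hcon
      push_neg at hcon
      apply hpS
      intro I hI
      obtain ⟨W, hW1, hW2⟩ := hcon I hI
      exact ⟨W, hW1, hW2⟩
    obtain ⟨I₀, hI₀, hdom⟩ := hex
    have hcardbound : ∀ t : Finset V, t.card = J + 2 → tᶜ.card ≤ p := by
      intro t htc
      have h1 : tᶜ.card = Fintype.card V - t.card := Finset.card_compl t
      have h2 : (Fintype.card V : ℤ) - igamma G - 1 ≤ (J : ℤ) := by rw [hJj]; exact hj
      omega
    set x₀ : V := Finset.univ.min' hneV with hx₀def
    have hx₀ : ∀ y : V, x₀ ≤ y := fun y => Finset.min'_le _ y (Finset.mem_univ y)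
    set cex : Finset V → ℤ := NCAux.ext (NC G) (J + 1) c with hcex
    have hDc : ∀ t, NCAux.Dd cex t = 0 := by
      intro t
      by_cases htc : t.card = J
      · by_cases htK : t ∈ NC G
        · calc NCAux.Dd cex t = bdry (NC G) J c ⟨t, htK, htc⟩ :=
                (NCAux.bdry_eq_Dd (NC G) J c htK htc).symm
            _ = 0 := by rw [hc]; rfl
        · rw [NCAux.Dd]
          refine Finset.sum_eq_zero fun w hw => ?_
          have hz : cex (insert w t) = 0 := by
            by_contra hq
            have hsup := NCAux.ext_support (NC G) (J+1) c hq
            exact htK ((NCAux.mem_NC G).2 (fun hmm =>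
              ((NCAux.mem_NC G).1 hsup.1) (NCAux.Mg_insert G hmm w)))
          rw [hz, mul_zero]
      · rw [NCAux.Dd]
        refine Finset.sum_eq_zero fun w hw => ?_
        have hz : cex (insert w t) = 0 := by
          by_contra hq
          have hsup := NCAux.ext_support (NC G) (J+1) c hq
          have hwt : w ∉ t := Finset.mem_compl.1 hw
          rw [Finset.card_insert_of_notMem hwt] at hsup
          omega
        rw [hz, mul_zero]
    set β : Finset V → ℤ := fun t => if NCAux.Mg G t then NCAux.h0 x₀ cex t else 0 with hβ
    have hβeval : ∀ t, β t = if NCAux.Mg G t then NCAux.h0 x₀ cex t else 0 := fun t => rfl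
    have hsuppβ : ∀ t, β t ≠ 0 → NCAux.Mg G t ∧ t.card = J + 2 ∧ tᶜ.card ≤ p ∧
        p + 1 ≤ NCAux.lev I₀ t + (p + 1) := by
      intro t ht
      rw [hβeval] at ht
      by_cases hmg : NCAux.Mg G t
      swap
      · rw [if_neg hmg] at ht; exact absurd rfl ht
      rw [if_pos hmg] at ht
      rw [NCAux.h0] at ht
      by_cases hxt : x₀ ∈ t
      swap
      · rw [if_neg hxt] at ht; exact absurd rfl ht
      rw [if_pos hxt] at ht
      have hsup := NCAux.ext_support (NC G) (J+1) c ht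
      have hcard : t.card = J + 2 := by
        have := Finset.card_erase_add_one hxt
        omega
      exact ⟨hmg, hcard, hcardbound t hcard, by omega⟩
    have hcycβ : ∀ t, NCAux.Qd G β t = 0 := by
      intro t
      rw [NCAux.Qd]
      split_ifs with hmg
      swap
      · rfl
      have heq : NCAux.Dd β t = NCAux.Dd (NCAux.h0 x₀ cex) t := by
        rw [NCAux.Dd, NCAux.Dd]
        refine Finset.sum_congr rfl fun w hw => ?_
        have hb : β (insert w t) = NCAux.h0 x₀ cex (insert w t) := by
          rw [hβeval, if_pos (NCAux.Mg_insert G hmg w)]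
        rw [hb]
      have hid := NCAux.h0_id x₀ hx₀ cex t
      have hh0D : NCAux.h0 x₀ (NCAux.Dd cex) t = 0 := by
        rw [NCAux.h0]
        split_ifs
        · exact hDc _
        · rfl
      have hcext : cex t = 0 := by
        by_contra hq
        exact ((NCAux.mem_NC G).1 (NCAux.ext_support (NC G) (J+1) c hq).1) hmg
      rw [heq]
      omega
    obtain ⟨y, hycard, hy⟩ :=
      NCAux.Lmain G I₀ x₀ hI₀ hdom (p + 1) (J + 2) β hsuppβ hcycβ
    set bfun : Finset V → ℤ := fun t => NCAux.h0 x₀ cex t - NCAux.Dd y t with hbfun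
    have hbfeval : ∀ t, bfun t = NCAux.h0 x₀ cex t - NCAux.Dd y t := fun t => rfl
    have hbMg : ∀ t, NCAux.Mg G t → bfun t = 0 := by
      intro t hmg
      have h1 : β t = NCAux.h0 x₀ cex t := by rw [hβeval, if_pos hmg]
      have h2 := hy t
      rw [NCAux.Qd, if_pos hmg] at h2
      rw [hbfeval]
      omega
    have hbcard : ∀ t, bfun t ≠ 0 → t.card = J + 2 := by
      intro t hb
      by_contra hcard
      apply hb
      rw [hbfeval]
      have h1 : NCAux.h0 x₀ cex t = 0 := by
        rw [NCAux.h0]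
        split_ifs with hxt
        · by_contra hq
          have hsup := NCAux.ext_support (NC G) (J+1) c hq
          have := Finset.card_erase_add_one hxt
          omega
        · rfl
      have h2 : NCAux.Dd y t = 0 := by
        rw [NCAux.Dd]
        refine Finset.sum_eq_zero fun w hw => ?_
        have hz : y (insert w t) = 0 := by
          by_contra hq
          have := hycard _ hq
          have hwt : w ∉ t := Finset.mem_compl.1 hw
          rw [Finset.card_insert_of_notMem hwt] at this
          omega
        rw [hz, mul_zero]
      omega
    refine ⟨fun s => bfun s.1, ?_⟩
    have hext_b : NCAux.ext (NC G) (J + 2) (fun s => bfun s.1) = bfun := by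
      funext t'
      rw [NCAux.ext]
      split_ifs with hq
      · rfl
      · symm
        by_cases hK : t' ∈ NC G
        · by_contra hbne
          exact hq ⟨hK, hbcard t' hbne⟩
        · exact hbMg t' (not_not.1 (fun hmm => hK ((NCAux.mem_NC G).2 hmm)))
    funext s
    obtain ⟨t, htK, htc⟩ := s
    rw [NCAux.bdry_eq_Dd (NC G) (J+1) (fun s => bfun s.1) htK htc, hext_b]
    have hDsplit : NCAux.Dd bfun t
        = NCAux.Dd (NCAux.h0 x₀ cex) t - NCAux.Dd (NCAux.Dd y) t := by
      rw [hbfun]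
      exact NCAux.Dd_sub _ _ t
    have hid := NCAux.h0_id x₀ hx₀ cex t
    have hh0D : NCAux.h0 x₀ (NCAux.Dd cex) t = 0 := by
      rw [NCAux.h0]
      split_ifs
      · exact hDc _
      · rfl
    have hDDy := NCAux.Dd_Dd y t
    have hcext : cex t = c ⟨t, htK, htc⟩ := by
      rw [hcex, NCAux.ext, dif_pos (⟨htK, htc⟩ : t ∈ NC G ∧ t.card = J + 1)]
    rw [hDsplit, hDDy, sub_zero]
    omega
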